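/- Let U1 and U2 be self-adjoint 3×3 matrices of linear forms over ℂ (i.e., Uᵢ(z) = Uᵢ(z)* for all real z) giving determinantal representations of the same smooth cubic surface S and corresponding to the same six skew lines. If U2 = X·U1·Y with X,Y ∈ GL₃(ℂ), then Y = k·X* for some nonzero real number k; consequently U1 and U2 are equivalent if and only if U1 is hermitean equivalent to U2 or to −U2. -/

import Mathlib

open MvPolynomial Matrix

lemma pderiv_lin (c : Fin 4 → ℂ) (i : Fin 4) :
    pderiv i (∑ m : Fin 4, C (c m) * X m : MvPolynomial (Fin 4) ℂ) = C (c i) := by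
  rw [map_sum]
  simp only [pderiv_C_mul, pderiv_X]
  simp [Pi.single_apply, Finset.sum_ite_eq]

lemma eval_lin (c : Fin 4 → ℂ) (z : Fin 4 → ℂ) :
    eval z (∑ m : Fin 4, C (c m) * X m : MvPolynomial (Fin 4) ℂ) = ∑ m, z m * c m := by
  simp [mul_comm]

lemma pderiv_det_eval (M : Fin 4 → Matrix (Fin 3) (Fin 3) ℂ) (z : Fin 4 → ℂ) (i : Fin 4) :
    eval z (pderiv i (Matrix.of fun a b => ∑ m : Fin 4, C (M m a b) * X m).det)
      = ∑ j : Fin 3, ((∑ m, z m • M m).updateRow j (M i j)).det := by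
  have hN : ∀ a b : Fin 3, (∑ m, z m • M m) a b = ∑ m, z m * M m a b := by
    intro a b; simp [Matrix.sum_apply]
  rw [Matrix.det_fin_three]
  simp only [Matrix.of_apply, map_sub, map_add, pderiv_mul, pderiv_lin, _root_.map_mul, eval_C,
    Fin.sum_univ_three, Matrix.det_fin_three, Matrix.updateRow_apply, eval_lin, hN]
  norm_num [Fin.ext_iff]
  ring

lemma det_row_dep {N : Matrix (Fin 3) (Fin 3) ℂ} {a b : Fin 3} (hab : a ≠ b)
    (x y : ℂ) (hxy : ¬(x = 0 ∧ y = 0)) (h : x • N a + y • N b = 0) : N.det = 0 := by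
  by_cases hx : x = 0
  · have hy : y ≠ 0 := fun hy => hxy ⟨hx, hy⟩
    have hb : ∀ j, N b j = 0 := by
      intro j
      have := congrFun h j
      simp only [hx, Pi.add_apply, Pi.smul_apply, smul_eq_mul, zero_mul, zero_smul,
        Pi.zero_apply, zero_add] at this
      exact (mul_eq_zero.mp this).resolve_left hy
    exact Matrix.det_eq_zero_of_row_eq_zero b hb
  · have key : N a + (x⁻¹ * y) • N b = 0 := by
      funext j
      have hj := congrFun h j
      simp only [Pi.add_apply, Pi.smul_apply, smul_eq_mul, Pi.zero_apply] at hj ⊢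
      have h2 : x * N a j = -(y * N b j) := by linear_combination hj
      have h3 : N a j = -(x⁻¹ * y) * N b j := by
        field_simp
        linear_combination h2
      rw [h3]; ring
    have := Matrix.det_updateRow_add_smul_self N hab (x⁻¹ * y)
    rw [key] at this
    rw [← this]
    exact Matrix.det_eq_zero_of_row_eq_zero a (by simp)

-- two rows of a matrix with 2-dim kernel are dependent
lemma rows_dep {N : Matrix (Fin 3) (Fin 3) ℂ} {v w : Fin 3 → ℂ}
    (hvw : LinearIndependent ℂ ![v, w]) (hv : N.mulVec v = 0) (hw : N.mulVec w = 0)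
    (a b : Fin 3) (hab : a ≠ b) :
    ∃ x y : ℂ, ¬(x = 0 ∧ y = 0) ∧ x • N a + y • N b = 0 := by
  by_contra hcon
  push_neg at hcon
  have hind : LinearIndependent ℂ ![N a, N b] := by
    rw [LinearIndependent.pair_iff]
    intro s t hst
    by_contra hc
    exact (hcon s t (by tauto)) hst
  -- rank N ≥ 2 since rows a b are indep: rows in range of Nᵀ.mulVecLin
  have hrank2 : 2 ≤ N.rank := by
    rw [← Matrix.rank_transpose]
    have hmem : ∀ c : Fin 3, N c ∈ LinearMap.range Nᵀ.mulVecLin := by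
      intro c
      refine ⟨Pi.single c 1, ?_⟩
      funext j
      simp [Matrix.mulVecLin_apply, Matrix.mulVec, dotProduct, Pi.single_apply, mul_ite]
    have hle : Submodule.span ℂ (Set.range ![N a, N b]) ≤ LinearMap.range Nᵀ.mulVecLin := by
      rw [Submodule.span_le]
      rintro - ⟨i, rfl⟩
      fin_cases i
      · simpa using hmem a
      · simpa using hmem b
    calc 2 = Module.finrank ℂ (Submodule.span ℂ (Set.range ![N a, N b])) := by
            rw [finrank_span_eq_card hind]; simp
      _ ≤ Module.finrank ℂ (LinearMap.range Nᵀ.mulVecLin) := Submodule.finrank_mono hle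
      _ = Nᵀ.rank := rfl
  -- but kernel has dim ≥ 2 so rank ≤ 1
  have hker : 2 ≤ Module.finrank ℂ (LinearMap.ker N.mulVecLin) := by
    have hle : Submodule.span ℂ (Set.range ![v, w]) ≤ LinearMap.ker N.mulVecLin := by
      rw [Submodule.span_le]
      rintro - ⟨i, rfl⟩
      fin_cases i <;> simp [LinearMap.mem_ker, Matrix.mulVecLin_apply, hv, hw]
    calc 2 = Module.finrank ℂ (Submodule.span ℂ (Set.range ![v, w])) := by
            rw [finrank_span_eq_card hvw]; simp
      _ ≤ _ := Submodule.finrank_mono hle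
  have := LinearMap.finrank_range_add_finrank_ker N.mulVecLin
  have h3 : Module.finrank ℂ (Fin 3 → ℂ) = 3 := by simp
  rw [h3] at this
  have : N.rank + 2 ≤ 3 := by
    have : N.rank = Module.finrank ℂ (LinearMap.range N.mulVecLin) := rfl
    omega
  omega

lemma eval_detpoly (M : Fin 4 → Matrix (Fin 3) (Fin 3) ℂ) (z : Fin 4 → ℂ) :
    eval z ((Matrix.of fun a b => ∑ m : Fin 4, C (M m a b) * X m).det)
      = (∑ m, z m • M m).det := by
  rw [RingHom.map_det]
  congr 1
  ext a b
  simp [Matrix.sum_apply, mul_comm]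

lemma ker_span (M : Fin 4 → Matrix (Fin 3) (Fin 3) ℂ) (c : ℂ) (hc : c ≠ 0)
    (Fc : MvPolynomial (Fin 4) ℂ)
    (hd : (Matrix.of fun a b => ∑ m : Fin 4, C (M m a b) * X m).det = C c * Fc)
    (hsm : ∀ z : Fin 4 → ℂ, z ≠ 0 → eval z Fc = 0 → ∃ i, eval z (pderiv i Fc) ≠ 0)
    (z₀ : Fin 4 → ℂ) (hz₀ : z₀ ≠ 0)
    (v : Fin 3 → ℂ) (hv : v ≠ 0) (hkv : (∑ m, z₀ m • M m).mulVec v = 0) :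
    ∀ w, (∑ m, z₀ m • M m).mulVec w = 0 → ∃ a : ℂ, w = a • v := by
  intro w hw
  by_contra hcon
  push_neg at hcon
  have hvw : LinearIndependent ℂ ![v, w] :=
    (LinearIndependent.pair_iff' hv).mpr (fun a ha => hcon a ha.symm)
  have hdet0 : (∑ m, z₀ m • M m).det = 0 :=
    (Matrix.exists_mulVec_eq_zero_iff).mp ⟨v, hv, hkv⟩
  have hF0 : eval z₀ Fc = 0 := by
    have h1 := congrArg (eval z₀) hd
    rw [eval_detpoly] at h1
    rw [hdet0] at h1
    simp only [_root_.map_mul, eval_C] at h1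
    exact ((mul_eq_zero.mp h1.symm).resolve_left hc)
  obtain ⟨i, hi⟩ := hsm z₀ hz₀ hF0
  apply hi
  have hjac := pderiv_det_eval M z₀ i
  rw [hd, pderiv_C_mul] at hjac
  simp only [_root_.map_mul, eval_C] at hjac
  have hterm : ∀ j : Fin 3, (((∑ m, z₀ m • M m).updateRow j (M i j)).det = 0) := by
    intro j
    have key : ∀ a b : Fin 3, a ≠ b → a ≠ j → b ≠ j →
        (((∑ m, z₀ m • M m).updateRow j (M i j)).det = 0) := by
      intro a b hab haj hbj
      obtain ⟨x, y, hxy, hdep⟩ := rows_dep hvw hkv hw a b hab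
      refine det_row_dep hab x y hxy ?_
      rw [Matrix.updateRow_ne haj, Matrix.updateRow_ne hbj]
      exact hdep
    fin_cases j
    · exact key 1 2 (by decide) (by decide) (by decide)
    · exact key 0 2 (by decide) (by decide) (by decide)
    · exact key 0 1 (by decide) (by decide) (by decide)
  rw [Finset.sum_eq_zero (fun j _ => hterm j)] at hjac
  exact (mul_eq_zero.mp hjac).resolve_left hc

lemma scalar_of_eigen (Z : Matrix (Fin 3) (Fin 3) ℂ) (u : Fin 4 → Fin 3 → ℂ)
    (hind : ∀ i j l : Fin 4, i ≠ j → i ≠ l → j ≠ l → LinearIndependent ℂ ![u i, u j, u l])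
    (c : Fin 4 → ℂ) (heig : ∀ i, Z.mulVec (u i) = c i • u i) :
    ∃ k : ℂ, Z = k • (1 : Matrix (Fin 3) (Fin 3) ℂ) := by
  set e : Fin 3 → Fin 4 := Fin.castSucc with he
  set P : Matrix (Fin 3) (Fin 3) ℂ := Matrix.of fun a b => u (e b) a with hP
  have hcols : (fun j : Fin 3 => Pᵀ j) = ![u 0, u 1, u 2] := by
    funext j a
    fin_cases j <;> rfl
  have hUnit : IsUnit P := by
    rw [← Matrix.linearIndependent_cols_iff_isUnit]
    rw [show P.col = ![u 0, u 1, u 2] from hcols]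
    exact hind 0 1 2 (by decide) (by decide) (by decide)
  have hUdet : IsUnit P.det := (Matrix.isUnit_iff_isUnit_det P).mp hUnit
  set d : Fin 3 → ℂ := fun j => c (e j) with hdd
  have hZP : Z * P = P * Matrix.diagonal d := by
    ext a b
    rw [Matrix.mul_apply, Matrix.mul_diagonal]
    have h1 := congrFun (heig (e b)) a
    simp only [Matrix.mulVec, dotProduct, Pi.smul_apply, smul_eq_mul] at h1
    simpa [hP, mul_comm] using h1
  set w : Fin 3 → ℂ := P⁻¹.mulVec (u 3) with hw
  have hPw : P.mulVec w = u 3 := by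
    rw [hw, Matrix.mulVec_mulVec, Matrix.mul_nonsing_inv _ hUdet, Matrix.one_mulVec]
  have hDw : (Matrix.diagonal d).mulVec w = c 3 • w := by
    have hinj : Function.Injective P.mulVec := Matrix.mulVec_injective_iff_isUnit.mpr hUnit
    apply hinj
    rw [Matrix.mulVec_mulVec, ← hZP, ← Matrix.mulVec_mulVec, hPw, heig 3, Matrix.mulVec_smul, hPw]
  have hweq : ∀ a : Fin 3, d a * w a = c 3 * w a := by
    intro a
    have := congrFun hDw a
    rwa [Matrix.mulVec_diagonal, Pi.smul_apply, smul_eq_mul] at this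
  -- each w a ≠ 0
  have hPmul : ∀ a : Fin 3, u 3 a = w 0 * u 0 a + w 1 * u 1 a + w 2 * u 2 a := by
    intro a
    have := congrFun hPw a
    simp only [Matrix.mulVec, dotProduct, Fin.sum_univ_three] at this
    rw [← this, hP]
    simp only [Matrix.of_apply]
    have e0 : e 0 = 0 := rfl
    have e1 : e 1 = 1 := rfl
    have e2 : e 2 = 2 := rfl
    rw [e0, e1, e2]
    ring
  have hwne : ∀ a : Fin 3, w a ≠ 0 := by
    intro a ha
    have key : ∀ i j : Fin 4, i ≠ j → i ≠ 3 → j ≠ 3 →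
        (∀ b : Fin 3, u 3 b = w 0 * u 0 b + w 1 * u 1 b + w 2 * u 2 b) →
        (∀ b : Fin 3, w 0 * u 0 b + w 1 * u 1 b + w 2 * u 2 b
            = (if (0:Fin 4) = i then w 0 else if (0:Fin 4) = j then w 0 else 0) * u i b
            + 0) → True := fun _ _ _ _ _ _ _ => trivial
    clear key
    fin_cases a
    · have hli := Fintype.linearIndependent_iff.mp
        (hind 1 2 3 (by decide) (by decide) (by decide)) ![w 1, w 2, -1]
      have h0 : ∑ i : Fin 3, (![w 1, w 2, -1] i) • (![u 1, u 2, u 3] i) = 0 := by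
        funext b
        simp only [Fin.sum_univ_three, Matrix.cons_val_zero, Matrix.cons_val_one,
          Matrix.head_cons, Pi.add_apply, Pi.smul_apply, smul_eq_mul, Pi.zero_apply,
          Matrix.cons_val_two, Matrix.tail_cons]
        have := hPmul b
        have ha0 : w 0 = 0 := by simpa using ha
        linear_combination -this - u 0 b * ha0
      have := hli h0 2
      change (-1 : ℂ) = 0 at this
      norm_num at this
    · have hli := Fintype.linearIndependent_iff.mp
        (hind 0 2 3 (by decide) (by decide) (by decide)) ![w 0, w 2, -1]
      have h0 : ∑ i : Fin 3, (![w 0, w 2, -1] i) • (![u 0, u 2, u 3] i) = 0 := by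
        funext b
        simp only [Fin.sum_univ_three, Matrix.cons_val_zero, Matrix.cons_val_one,
          Matrix.head_cons, Pi.add_apply, Pi.smul_apply, smul_eq_mul, Pi.zero_apply,
          Matrix.cons_val_two, Matrix.tail_cons]
        have := hPmul b
        have ha0 : w 1 = 0 := by simpa using ha
        linear_combination -this - u 1 b * ha0
      have := hli h0 2
      change (-1 : ℂ) = 0 at this
      norm_num at this
    · have hli := Fintype.linearIndependent_iff.mp
        (hind 0 1 3 (by decide) (by decide) (by decide)) ![w 0, w 1, -1]
      have h0 : ∑ i : Fin 3, (![w 0, w 1, -1] i) • (![u 0, u 1, u 3] i) = 0 := by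
        funext b
        simp only [Fin.sum_univ_three, Matrix.cons_val_zero, Matrix.cons_val_one,
          Matrix.head_cons, Pi.add_apply, Pi.smul_apply, smul_eq_mul, Pi.zero_apply,
          Matrix.cons_val_two, Matrix.tail_cons]
        have := hPmul b
        have ha0 : w 2 = 0 := by simpa using ha
        linear_combination -this - u 2 b * ha0
      have := hli h0 2
      change (-1 : ℂ) = 0 at this
      norm_num at this
  have hd3 : ∀ a : Fin 3, d a = c 3 := fun a =>
    mul_right_cancel₀ (hwne a) (hweq a)
  have hdiag : Matrix.diagonal d = c 3 • (1 : Matrix (Fin 3) (Fin 3) ℂ) := by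
    ext a b
    by_cases hab : a = b
    · subst hab; simp [hd3 a]
    · simp [Matrix.diagonal_apply_ne _ hab, Matrix.one_apply_ne hab]
  refine ⟨c 3, ?_⟩
  calc Z = Z * (P * P⁻¹) := by rw [Matrix.mul_nonsing_inv _ hUdet, mul_one]
    _ = (Z * P) * P⁻¹ := by rw [mul_assoc]
    _ = (P * (c 3 • 1)) * P⁻¹ := by rw [hZP, hdiag]
    _ = c 3 • (P * P⁻¹) := by
        rw [Matrix.mul_smul, mul_one, Matrix.smul_mul]
    _ = c 3 • 1 := by rw [Matrix.mul_nonsing_inv _ hUdet]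

section helper
variable (Fc : MvPolynomial (Fin 4) ℂ)

-- main part 1 as standalone lemma
lemma part1 (A B : Fin 4 → Matrix (Fin 3) (Fin 3) ℂ)
    (hA : ∀ m, (A m).IsHermitian) (hB : ∀ m, (B m).IsHermitian)
    (hFne : Fc ≠ 0)
    (hsm : ∀ z : Fin 4 → ℂ, z ≠ 0 → eval z Fc = 0 → ∃ i, eval z (pderiv i Fc) ≠ 0)
    (cA cB : ℂ) (hcA : cA ≠ 0) (hcB : cB ≠ 0)
    (hdA : (Matrix.of fun i j => ∑ m : Fin 4, C (A m i j) * X m).det = C cA * Fc)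
    (hdB : (Matrix.of fun i j => ∑ m : Fin 4, C (B m i j) * X m).det = C cB * Fc)
    (hlines : ∃ p q : Fin 6 → (Fin 3 → ℂ),
      (∀ i j l : Fin 6, i ≠ j → i ≠ l → j ≠ l →
        LinearIndependent ℂ ![p i, p j, p l]) ∧
      (∀ i, {z : Fin 4 → ℂ | (∑ m, z m • A m).mulVec (p i) = 0}
          = {z : Fin 4 → ℂ | (∑ m, z m • B m).mulVec (q i) = 0}))
    (X' Y' : Matrix (Fin 3) (Fin 3) ℂ) (hXd : IsUnit X'.det) (hYd : IsUnit Y'.det)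
    (hrep : ∀ m, B m = X' * A m * Y') :
    ∃ r : ℝ, r ≠ 0 ∧ Y' = (r : ℂ) • X'.conjTranspose := by
  obtain ⟨p, q, hp, hsets⟩ := hlines
  have hXdH : IsUnit X'ᴴ.det := by rw [Matrix.det_conjTranspose]; exact hXd.star
  have hYdH : IsUnit Y'ᴴ.det := by rw [Matrix.det_conjTranspose]; exact hYd.star
  have hYinvd : IsUnit Y'⁻¹.det := Y'.isUnit_nonsing_inv_det hYd
  -- the factorization of linear pencils
  have hfact : ∀ z : Fin 4 → ℂ, (∑ m, z m • B m) = X' * (∑ m, z m • A m) * Y' := by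
    intro z
    simp only [hrep, Finset.mul_sum, Finset.sum_mul, mul_smul_comm, smul_mul_assoc]
  set Z : Matrix (Fin 3) (Fin 3) ℂ := Y'⁻¹ * X'ᴴ with hZdef
  have hZd : IsUnit Z.det := by
    rw [Matrix.det_mul]; exact hYinvd.mul hXdH
  -- B m * Z = Zᴴ * B m
  have hBm2 : ∀ m, Y'ᴴ * A m * X'ᴴ = B m := by
    intro m
    have h1 : (B m)ᴴ = B m := hB m
    rw [hrep m] at h1
    have h2 : (X' * A m * Y')ᴴ = Y'ᴴ * A m * X'ᴴ := by
      rw [Matrix.conjTranspose_mul, Matrix.conjTranspose_mul, (hA m).eq, mul_assoc]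
    rw [hrep m, ← h1, h2]
  have hBZ : ∀ m, B m * Z = Zᴴ * B m := by
    intro m
    have hZH : Zᴴ = X' * (Y'ᴴ)⁻¹ := by
      rw [hZdef, Matrix.conjTranspose_mul, Matrix.conjTranspose_conjTranspose,
        Matrix.conjTranspose_nonsing_inv]
    calc B m * Z = X' * A m * Y' * (Y'⁻¹ * X'ᴴ) := by rw [hrep m, hZdef]
      _ = X' * A m * (Y' * Y'⁻¹) * X'ᴴ := by noncomm_ring
      _ = X' * A m * X'ᴴ := by rw [Matrix.mul_nonsing_inv _ hYd, mul_one]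
      _ = X' * ((Y'ᴴ)⁻¹ * Y'ᴴ) * A m * X'ᴴ := by
          rw [Matrix.nonsing_inv_mul _ hYdH, mul_one]
      _ = X' * (Y'ᴴ)⁻¹ * (Y'ᴴ * A m * X'ᴴ) := by noncomm_ring
      _ = Zᴴ * B m := by rw [hZH, hBm2 m]
  have hNZ : ∀ z : Fin 4 → ℂ, (∑ m, z m • B m) * Z = Zᴴ * (∑ m, z m • B m) := by
    intro z
    simp only [Finset.sum_mul, Finset.mul_sum, smul_mul_assoc, mul_smul_comm, hBZ]
  -- injectivity facts
  have hXinj : Function.Injective X'.mulVec :=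
    Matrix.mulVec_injective_iff_isUnit.mpr ((Matrix.isUnit_iff_isUnit_det X').mpr hXd)
  have hYinj : Function.Injective Y'.mulVec :=
    Matrix.mulVec_injective_iff_isUnit.mpr ((Matrix.isUnit_iff_isUnit_det Y').mpr hYd)
  have hYiinj : Function.Injective Y'⁻¹.mulVec :=
    Matrix.mulVec_injective_iff_isUnit.mpr ((Matrix.isUnit_iff_isUnit_det _).mpr hYinvd)
  -- eigenvector property for each line
  have main_i : ∀ i : Fin 6, ∃ a : ℂ,
      Z.mulVec (Y'⁻¹.mulVec (p i)) = a • (Y'⁻¹.mulVec (p i)) := by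
    intro i
    -- p i ≠ 0
    have hjl : ∃ j l : Fin 6, i ≠ j ∧ i ≠ l ∧ j ≠ l := by
      fin_cases i
      · exact ⟨1, 2, by decide, by decide, by decide⟩
      · exact ⟨0, 2, by decide, by decide, by decide⟩
      all_goals exact ⟨0, 1, by decide, by decide, by decide⟩
    obtain ⟨j, l, hij, hil, hjl⟩ := hjl
    have hpne : p i ≠ 0 := by
      have := (hp i j l hij hil hjl).ne_zero 0
      simpa using this
    -- a nonzero z₀ on the line
    set L : (Fin 4 → ℂ) →ₗ[ℂ] (Fin 3 → ℂ) :=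
      { toFun := fun z => (∑ m, z m • A m).mulVec (p i)
        map_add' := by
          intro z z'
          simp only [Pi.add_apply, add_smul, Finset.sum_add_distrib, Matrix.add_mulVec]
        map_smul' := by
          intro s z
          simp only [Pi.smul_apply, smul_eq_mul, RingHom.id_apply]
          have hsum : (∑ m, (s * z m) • A m) = s • (∑ m, z m • A m) := by
            rw [Finset.smul_sum]
            exact Finset.sum_congr rfl fun m _ => mul_smul _ _ _
          rw [hsum, Matrix.smul_mulVec] } with hL
    have hker : LinearMap.ker L ≠ ⊥ := by
      apply LinearMap.ker_ne_bot_of_finrank_lt (by simp)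
    obtain ⟨z₀, hz₀mem, hz₀ne⟩ := (Submodule.ne_bot_iff _).mp hker
    have hz₀A : (∑ m, z₀ m • A m).mulVec (p i) = 0 := hz₀mem
    have hz₀B : (∑ m, z₀ m • B m).mulVec (q i) = 0 := by
      have : z₀ ∈ {z : Fin 4 → ℂ | (∑ m, z m • A m).mulVec (p i) = 0} := hz₀A
      rw [hsets i] at this
      exact this
    -- q i ≠ 0
    have hqne : q i ≠ 0 := by
      intro h0
      have hall : ∀ z : Fin 4 → ℂ, (∑ m, z m • A m).mulVec (p i) = 0 := by
        intro z
        have hz : z ∈ {z : Fin 4 → ℂ | (∑ m, z m • B m).mulVec (q i) = 0} := by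
          simp [Set.mem_setOf_eq, h0, Matrix.mulVec_zero]
        rw [← hsets i] at hz
        exact hz
      have hev : ∀ z : Fin 4 → ℂ, eval z (C cA * Fc) = eval z (0 : MvPolynomial (Fin 4) ℂ) := by
        intro z
        rw [← hdA, eval_detpoly, map_zero]
        exact (Matrix.exists_mulVec_eq_zero_iff).mp ⟨p i, hpne, hall z⟩
      have h0' : C cA * Fc = 0 := MvPolynomial.funext hev
      rcases mul_eq_zero.mp h0' with h | h
      · exact hcA (by rwa [MvPolynomial.C_eq_zero] at h)
      · exact hFne h
    -- kernel span lemmas at z₀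
    have kerB := ker_span B cB hcB Fc hdB hsm z₀ hz₀ne (q i) hqne hz₀B
    have kerA := ker_span A cA hcA Fc hdA hsm z₀ hz₀ne (p i) hpne hz₀A
    -- Z (q i) is in the kernel of N2(z₀)
    have hZq : (∑ m, z₀ m • B m).mulVec (Z.mulVec (q i)) = 0 := by
      rw [Matrix.mulVec_mulVec, hNZ z₀, ← Matrix.mulVec_mulVec, hz₀B, Matrix.mulVec_zero]
    obtain ⟨a, ha⟩ := kerB _ hZq
    -- Y' (q i) is in the kernel of N1(z₀)
    have hY'q : (∑ m, z₀ m • A m).mulVec (Y'.mulVec (q i)) = 0 := by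
      apply hXinj
      rw [Matrix.mulVec_mulVec, Matrix.mulVec_mulVec, Matrix.mulVec_zero,
        ← hfact z₀, hz₀B]
    obtain ⟨d, hd⟩ := kerA _ hY'q
    have hdne : d ≠ 0 := by
      intro h0
      rw [h0, zero_smul] at hd
      exact hqne (hYinj (by rw [hd, Matrix.mulVec_zero]))
    -- q i = d • Y'⁻¹ (p i)
    have hq : q i = d • (Y'⁻¹.mulVec (p i)) := by
      apply hYinj
      rw [Matrix.mulVec_smul, Matrix.mulVec_mulVec, Matrix.mul_nonsing_inv _ hYd,
        Matrix.one_mulVec, hd]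
    refine ⟨a, ?_⟩
    rw [hq, Matrix.mulVec_smul] at ha
    have ha' : d • Z.mulVec (Y'⁻¹.mulVec (p i)) = d • (a • Y'⁻¹.mulVec (p i)) := by
      rw [ha, smul_comm]
    exact smul_right_injective _ hdne ha'
  -- now apply the scalar lemma
  set u : Fin 4 → (Fin 3 → ℂ) := fun i => Y'⁻¹.mulVec (p (Fin.castLE (by norm_num) i)) with hu
  have hindu : ∀ i j l : Fin 4, i ≠ j → i ≠ l → j ≠ l →
      LinearIndependent ℂ ![u i, u j, u l] := by
    intro i j l hij hil hjl
    have hinj : Function.Injective Y'⁻¹.mulVecLin := hYiinj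
    have hli := hp (Fin.castLE (by norm_num) i) (Fin.castLE (by norm_num) j)
      (Fin.castLE (by norm_num) l)
      (fun h => hij (Fin.castLE_injective _ h)) (fun h => hil (Fin.castLE_injective _ h))
      (fun h => hjl (Fin.castLE_injective _ h))
    have := hli.map' Y'⁻¹.mulVecLin (LinearMap.ker_eq_bot.mpr hinj)
    convert this using 1
    funext s
    fin_cases s <;> rfl
    all_goals rfl
  have heig : ∀ i : Fin 4, ∃ a : ℂ, Z.mulVec (u i) = a • u i := fun i =>
    main_i (Fin.castLE (by norm_num) i)
  choose a ha using heig
  obtain ⟨k, hZk⟩ := scalar_of_eigen Z u hindu a ha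
  -- k ≠ 0
  have hkne : k ≠ 0 := by
    intro h0
    rw [hZk, h0, zero_smul] at hZd
    simp at hZd
  -- k is real : k = star k
  have hBex : ∃ m, B m ≠ 0 := by
    by_contra hc
    push_neg at hc
    have : (Matrix.of fun i j => ∑ m : Fin 4, C (B m i j) * X m).det = 0 := by
      have hzero : ∀ i j : Fin 3, (∑ m : Fin 4, (C (B m i j) * X m : MvPolynomial (Fin 4) ℂ)) = 0 := by
        intro i j
        apply Finset.sum_eq_zero
        intro m _
        rw [hc m]
        simp
      apply Matrix.det_eq_zero_of_row_eq_zero 0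
      intro j
      simp [hzero]
    rw [hdB] at this
    rcases mul_eq_zero.mp this with h | h
    · exact hcB (by rwa [MvPolynomial.C_eq_zero] at h)
    · exact hFne h
  obtain ⟨m₀, hm₀⟩ := hBex
  have hkreal : star k = k := by
    have h1 := hBZ m₀
    rw [hZk] at h1
    rw [Matrix.conjTranspose_smul, Matrix.conjTranspose_one] at h1
    have h2 : k • B m₀ = star k • B m₀ := by
      calc k • B m₀ = B m₀ * (k • 1) := by rw [Matrix.mul_smul, mul_one]
        _ = (star k • 1) * B m₀ := h1
        _ = star k • B m₀ := by rw [Matrix.smul_mul, one_mul]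
    by_contra hne
    have h3 : (k - star k) • B m₀ = 0 := by
      rw [sub_smul, h2, sub_self]
    rcases smul_eq_zero.mp h3 with h | h
    · exact hne (by linear_combination -h)
    · exact hm₀ h
  -- Y' = k⁻¹ • X'ᴴ
  have hXH : X'ᴴ = k • Y' := by
    calc X'ᴴ = (Y' * Y'⁻¹) * X'ᴴ := by rw [Matrix.mul_nonsing_inv _ hYd, one_mul]
      _ = Y' * Z := by rw [hZdef, mul_assoc]
      _ = Y' * (k • 1) := by rw [hZk]
      _ = k • Y' := by rw [Matrix.mul_smul, mul_one]
  refine ⟨k.re⁻¹, ?_, ?_⟩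
  · simp only [ne_eq, inv_eq_zero]
    intro h0
    apply hkne
    have : (k.re : ℂ) = k := by
      rw [← Complex.conj_eq_iff_re]
      exact hkreal
    rw [← this, h0, Complex.ofReal_zero]
  · have hkre : (k.re : ℂ) = k := by
      rw [← Complex.conj_eq_iff_re]
      exact hkreal
    rw [Complex.ofReal_inv, hkre, hXH, smul_smul, inv_mul_cancel₀ hkne, one_smul]
end helper

lemma herm_scale (X' Am : Matrix (Fin 3) (Fin 3) ℂ) (s : ℝ) (hs : 0 ≤ s) :
    ((Real.sqrt s : ℂ) • X') * Am * ((Real.sqrt s : ℂ) • X')ᴴ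
      = (s : ℂ) • (X' * Am * X'ᴴ) := by
  rw [Matrix.conjTranspose_smul, Matrix.smul_mul, Matrix.smul_mul, Matrix.mul_smul, smul_smul]
  congr 1
  rw [RCLike.star_def, Complex.conj_ofReal, ← Complex.ofReal_mul, Real.mul_self_sqrt hs]

theorem stmt11
    (A B : Fin 4 → Matrix (Fin 3) (Fin 3) ℂ)
    (hA : ∀ m, (A m).IsHermitian) (hB : ∀ m, (B m).IsHermitian)
    (F : MvPolynomial (Fin 4) ℝ)
    (hF3 : (F.map (algebraMap ℝ ℂ)).IsHomogeneous 3)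
    (hsmooth : ∀ z : Fin 4 → ℂ, z ≠ 0 → eval z (F.map (algebraMap ℝ ℂ)) = 0 →
      ∃ i, eval z (pderiv i (F.map (algebraMap ℝ ℂ))) ≠ 0)
    (cA cB : ℂ) (hcA : cA ≠ 0) (hcB : cB ≠ 0)
    (hdA : (Matrix.of fun i j => ∑ m : Fin 4, C (A m i j) * X m).det
      = C cA * F.map (algebraMap ℝ ℂ))
    (hdB : (Matrix.of fun i j => ∑ m : Fin 4, C (B m i j) * X m).det
      = C cB * F.map (algebraMap ℝ ℂ))
    -- the two representations correspond to the same six skew lines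
    (hlines : ∃ p q : Fin 6 → (Fin 3 → ℂ),
      (∀ i j l : Fin 6, i ≠ j → i ≠ l → j ≠ l →
        LinearIndependent ℂ ![p i, p j, p l]) ∧
      (∀ i, {z : Fin 4 → ℂ | (∑ m, z m • A m).mulVec (p i) = 0}
          = {z : Fin 4 → ℂ | (∑ m, z m • B m).mulVec (q i) = 0})) :
    (∀ X' Y' : Matrix (Fin 3) (Fin 3) ℂ, IsUnit X'.det → IsUnit Y'.det →
      (∀ m, B m = X' * A m * Y') →
      ∃ r : ℝ, r ≠ 0 ∧ Y' = (r : ℂ) • X'.conjTranspose) ∧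
    ((∃ X' Y' : Matrix (Fin 3) (Fin 3) ℂ, IsUnit X'.det ∧ IsUnit Y'.det ∧
        ∀ m, B m = X' * A m * Y') ↔
      ((∃ X' : Matrix (Fin 3) (Fin 3) ℂ, IsUnit X'.det ∧
          ∀ m, B m = X' * A m * X'.conjTranspose) ∨
       (∃ X' : Matrix (Fin 3) (Fin 3) ℂ, IsUnit X'.det ∧
          ∀ m, -(B m) = X' * A m * X'.conjTranspose))) := by
  have hFne : F.map (algebraMap ℝ ℂ) ≠ 0 := by
    intro h0
    obtain ⟨i, hi⟩ := hsmooth (fun _ => 1) (fun hz => one_ne_zero (congrFun hz 0))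
      (by rw [h0]; simp)
    rw [h0] at hi
    simp at hi
  have hpart1 := part1 (F.map (algebraMap ℝ ℂ)) A B hA hB hFne hsmooth cA cB hcA hcB
    hdA hdB hlines
  refine ⟨hpart1, ?_, ?_⟩
  · rintro ⟨X', Y', hXd, hYd, hrep⟩
    obtain ⟨r, hr, hY⟩ := hpart1 X' Y' hXd hYd hrep
    rcases lt_or_gt_of_ne hr with hneg | hpos
    · right
      have hsne : ((Real.sqrt (-r) : ℝ) : ℂ) ≠ 0 := by
        rw [Complex.ofReal_ne_zero]
        exact ne_of_gt (Real.sqrt_pos.mpr (by linarith))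
      refine ⟨(Real.sqrt (-r) : ℂ) • X', ?_, ?_⟩
      · rw [Matrix.det_smul]
        exact ((isUnit_iff_ne_zero.mpr hsne).pow _).mul hXd
      · intro m
        rw [herm_scale X' (A m) (-r) (by linarith), hrep m, hY, Matrix.mul_smul]
        rw [← neg_smul]
        congr 1
        push_cast
        ring
    · left
      have hsne : ((Real.sqrt r : ℝ) : ℂ) ≠ 0 := by
        rw [Complex.ofReal_ne_zero]
        exact ne_of_gt (Real.sqrt_pos.mpr hpos)
      refine ⟨(Real.sqrt r : ℂ) • X', ?_, ?_⟩
      · rw [Matrix.det_smul]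
        exact ((isUnit_iff_ne_zero.mpr hsne).pow _).mul hXd
      · intro m
        rw [herm_scale X' (A m) r (le_of_lt hpos), hrep m, hY, Matrix.mul_smul]
  · rintro (⟨X', hXd, hrep⟩ | ⟨X', hXd, hrep⟩)
    · exact ⟨X', X'ᴴ, hXd, by rw [Matrix.det_conjTranspose]; exact hXd.star, hrep⟩
    · refine ⟨X', -(X'ᴴ), hXd, ?_, ?_⟩
      · rw [Matrix.det_neg, Matrix.det_conjTranspose]
        exact ((isUnit_iff_ne_zero.mpr (by norm_num : ((-1:ℂ))^(Fintype.card (Fin 3)) ≠ 0))).mul hXd.star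
      · intro m
        rw [Matrix.mul_neg, ← hrep m, neg_neg]
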